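/- Let $X$ be an $n\times n$ Hermitian complex matrix with rows $x_1, \ldots, x_n$ and eigenvalues $\lambda_1, \ldots, \lambda_n$. Then for every $0 < r \le 2$, $\sum_{i=1}^n |\lambda_i|^r \le \sum_{i=1}^n \|x_i\|_2^r$, where $\|x_i\|_2$ is the Euclidean norm of the $i$-th row. -/

import Mathlib

open Matrix

private lemma aux_rpow {r : ℝ} (hr0 : 0 < r) {a : ℝ} (ha : 0 ≤ a) :
    a ^ (2 - r) * a ^ r = a ^ (2 : ℝ) := by
  rcases ha.eq_or_lt with h | h
  · rw [← h, Real.zero_rpow hr0.ne', mul_zero, Real.zero_rpow two_ne_zero]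
  · rw [← Real.rpow_add h, sub_add_cancel]

theorem stmt5 {n : ℕ} (X : Matrix (Fin n) (Fin n) ℂ) (hX : X.IsHermitian)
    (r : ℝ) (hr0 : 0 < r) (hr2 : r ≤ 2) :
    ∑ i : Fin n, |hX.eigenvalues i| ^ r
      ≤ ∑ i : Fin n, (Real.sqrt (∑ j : Fin n, ‖X i j‖ ^ 2)) ^ r := by
  classical
  set u := hX.eigenvectorBasis with hu
  set lam := hX.eigenvalues with hlam
  -- Parseval identity
  have parseval : ∀ v : EuclideanSpace ℂ (Fin n),
      ∑ k : Fin n, ‖(inner ℂ (u k) v)‖ ^ 2 = ‖v‖ ^ 2 := by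
    intro v
    have h1 : ‖u.repr v‖ = ‖v‖ := u.repr.norm_map v
    calc ∑ k : Fin n, ‖(inner ℂ (u k) v)‖ ^ 2
        = ∑ k : Fin n, ‖u.repr v k‖ ^ 2 := by
          refine Finset.sum_congr rfl fun k _ => ?_
          rw [u.repr_apply_apply v k]
      _ = ‖v‖ ^ 2 := by
          rw [← h1, EuclideanSpace.norm_eq, Real.sq_sqrt (by positivity)]
  set c : Fin n → Fin n → ℝ := fun k j => ‖(X *ᵥ ⇑(u k)) j‖ with hc
  have hA1 : ∀ k j, c k j = |lam k| * ‖u k j‖ := by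
    intro k j
    simp only [hc, hX.mulVec_eigenvectorBasis, ← hu, ← hlam]
    rw [hu, hX.mulVec_eigenvectorBasis, hlam]
    simp [norm_smul, Real.norm_eq_abs]
  -- column normalization
  have hB : ∀ j, ∑ k : Fin n, ‖u k j‖ ^ 2 = 1 := by
    intro j
    have h := parseval (EuclideanSpace.single j (1 : ℂ))
    simp only [EuclideanSpace.inner_single_right, one_mul, norm_star,
      EuclideanSpace.norm_single, norm_one, one_pow, RingHom.id_apply] at h
    simpa using h
  -- row norms
  have hC : ∀ j, ∑ k : Fin n, (c k j) ^ 2 = ∑ i : Fin n, ‖X j i‖ ^ 2 := by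
    intro j
    set v : EuclideanSpace ℂ (Fin n) :=
      (WithLp.equiv 2 (Fin n → ℂ)).symm (fun i => (starRingEnd ℂ) (X j i)) with hv
    have h := parseval v
    have h2 : ∀ k, ‖(inner ℂ (u k) v)‖ = c k j := by
      intro k
      rw [← norm_inner_symm]
      have : (inner ℂ v (u k)) = (X *ᵥ ⇑(u k)) j := by
        simp only [hv, PiLp.inner_apply, WithLp.equiv_symm_apply, PiLp.toLp_apply, RingHom.id_apply,
          RCLike.inner_apply, starRingEnd_self_apply, mulVec, dotProduct]
        exact Finset.sum_congr rfl fun x _ => mul_comm _ _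
      rw [this]
    have h3 : ‖v‖ ^ 2 = ∑ i : Fin n, ‖X j i‖ ^ 2 := by
      rw [EuclideanSpace.norm_eq, Real.sq_sqrt (by positivity)]
      simp [hv]
    calc ∑ k : Fin n, (c k j) ^ 2 = ∑ k : Fin n, ‖(inner ℂ (u k) v)‖ ^ 2 := by
          refine Finset.sum_congr rfl fun k _ => ?_
          rw [h2 k]
      _ = ∑ i : Fin n, ‖X j i‖ ^ 2 := by rw [h, h3]
  -- unit columns
  have hUnit : ∀ k, ∑ j : Fin n, ‖u k j‖ ^ 2 = 1 := by
    intro k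
    have h1 : ‖u k‖ = 1 := u.orthonormal.1 k
    have h2 : ‖u k‖ ^ 2 = ∑ j : Fin n, ‖u k j‖ ^ 2 := by
      rw [EuclideanSpace.norm_eq, Real.sq_sqrt (by positivity)]
    rw [← h2, h1, one_pow]
  -- key per-eigenvalue identity
  have key : ∀ k, |lam k| ^ r = ∑ j : Fin n, ‖u k j‖ ^ (2 - r) * (c k j) ^ r := by
    intro k
    have hterm : ∀ j, ‖u k j‖ ^ (2 - r) * (c k j) ^ r = |lam k| ^ r * ‖u k j‖ ^ (2:ℝ) := by
      intro j
      rw [hA1 k j, Real.mul_rpow (abs_nonneg _) (norm_nonneg _)]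
      rw [show ‖u k j‖ ^ (2 - r) * (|lam k| ^ r * ‖u k j‖ ^ r)
          = |lam k| ^ r * (‖u k j‖ ^ (2 - r) * ‖u k j‖ ^ r) by ring,
        aux_rpow hr0 (norm_nonneg _)]
    calc |lam k| ^ r = |lam k| ^ r * ∑ j : Fin n, ‖u k j‖ ^ (2:ℝ) := by
          rw [show ∑ j : Fin n, ‖u k j‖ ^ (2:ℝ) = ∑ j : Fin n, ‖u k j‖ ^ 2 by
            refine Finset.sum_congr rfl fun j _ => ?_
            rw [show (2:ℝ) = ((2:ℕ):ℝ) by norm_num, Real.rpow_natCast]]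
          rw [hUnit k, mul_one]
      _ = ∑ j : Fin n, ‖u k j‖ ^ (2 - r) * (c k j) ^ r := by
          rw [Finset.mul_sum]
          exact Finset.sum_congr rfl fun j _ => (hterm j).symm
  -- per-column Hölder bound
  have holder : ∀ j, ∑ k : Fin n, ‖u k j‖ ^ (2 - r) * (c k j) ^ r
      ≤ (Real.sqrt (∑ i : Fin n, ‖X j i‖ ^ 2)) ^ r := by
    intro j
    set S := ∑ i : Fin n, ‖X j i‖ ^ 2 with hS
    have hSnn : (0:ℝ) ≤ S := by positivity
    have hsqrt : Real.sqrt S ^ r = S ^ (r / 2) := by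
      rw [Real.sqrt_eq_rpow, ← Real.rpow_mul hSnn, show (1/2*r:ℝ) = r/2 by ring]
    have hBrpow : ∑ k : Fin n, ‖u k j‖ ^ (2:ℝ) = 1 := by
      rw [show ∑ k : Fin n, ‖u k j‖ ^ (2:ℝ) = ∑ k : Fin n, ‖u k j‖ ^ 2 by
        refine Finset.sum_congr rfl fun k _ => ?_
        rw [show (2:ℝ) = ((2:ℕ):ℝ) by norm_num, Real.rpow_natCast]]
      exact hB j
    have hCrpow : ∑ k : Fin n, (c k j) ^ (2:ℝ) = S := by
      rw [show ∑ k : Fin n, (c k j) ^ (2:ℝ) = ∑ k : Fin n, (c k j) ^ 2 by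
        refine Finset.sum_congr rfl fun k _ => ?_
        rw [show (2:ℝ) = ((2:ℕ):ℝ) by norm_num, Real.rpow_natCast]]
      exact hC j
    rcases eq_or_lt_of_le hr2 with heq | hlt
    · -- r = 2
      subst heq
      refine le_of_eq ?_
      calc ∑ k : Fin n, ‖u k j‖ ^ (2 - 2:ℝ) * (c k j) ^ (2:ℝ)
          = ∑ k : Fin n, (c k j) ^ (2:ℝ) := by
            refine Finset.sum_congr rfl fun k _ => ?_
            norm_num
        _ = S := hCrpow
        _ = Real.sqrt S ^ (2:ℝ) := by
            rw [hsqrt, show (2/2:ℝ) = 1 by norm_num, Real.rpow_one]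
    · -- r < 2
      have h2r : (0:ℝ) < 2 - r := by linarith
      have hpq : Real.HolderConjugate (2/(2-r)) (2/r) := by
        rw [Real.holderConjugate_iff]; constructor
        · rw [lt_div_iff₀ h2r]; linarith
        · rw [inv_div, inv_div, ← add_div, sub_add_cancel]
          norm_num
      have hH := Real.inner_le_Lp_mul_Lq_of_nonneg (s := Finset.univ)
        (f := fun k => ‖u k j‖ ^ (2 - r)) (g := fun k => (c k j) ^ r) hpq
        (fun k _ => Real.rpow_nonneg (norm_nonneg _) _)
        (fun k _ => Real.rpow_nonneg (norm_nonneg _) _)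
      have e1 : ∑ k : Fin n, (‖u k j‖ ^ (2 - r)) ^ (2/(2-r)) = 1 := by
        rw [show ∑ k : Fin n, (‖u k j‖ ^ (2 - r)) ^ (2/(2-r))
            = ∑ k : Fin n, ‖u k j‖ ^ (2:ℝ) by
          refine Finset.sum_congr rfl fun k _ => ?_
          rw [← Real.rpow_mul (norm_nonneg _)]
          congr 1
          field_simp]
        exact hBrpow
      have e2 : ∑ k : Fin n, ((c k j) ^ r) ^ (2/r) = S := by
        rw [show ∑ k : Fin n, ((c k j) ^ r) ^ (2/r)
            = ∑ k : Fin n, (c k j) ^ (2:ℝ) by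
          refine Finset.sum_congr rfl fun k _ => ?_
          rw [← Real.rpow_mul (norm_nonneg _)]
          congr 1
          field_simp]
        exact hCrpow
      rw [e1, e2, Real.one_rpow, one_mul] at hH
      calc ∑ k : Fin n, ‖u k j‖ ^ (2 - r) * (c k j) ^ r
          ≤ S ^ (1/(2/r)) := hH
        _ = Real.sqrt S ^ r := by rw [hsqrt, one_div, inv_div]
  calc ∑ i : Fin n, |lam i| ^ r
      = ∑ k : Fin n, ∑ j : Fin n, ‖u k j‖ ^ (2 - r) * (c k j) ^ r :=
        Finset.sum_congr rfl fun k _ => key k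
    _ = ∑ j : Fin n, ∑ k : Fin n, ‖u k j‖ ^ (2 - r) * (c k j) ^ r := Finset.sum_comm
    _ ≤ ∑ j : Fin n, (Real.sqrt (∑ i : Fin n, ‖X j i‖ ^ 2)) ^ r :=
        Finset.sum_le_sum fun j _ => holder j
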